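/- Let E be a real inner product space, f, h : E → ℝ differentiable, x* ∈ E, and α, β : ℝ → ℝ with β differentiable. Suppose X, V, W : ℝ → E and t ∈ ℝ are such that X has derivative V t at t, the curve s ↦ X s + exp(−α s) • V s has derivative W t at t, and the curve s ↦ ∇h(X s + exp(−α s) • V s) has derivative −exp(α t + β t) • ∇f(X t) at t. Then the energy functional E(s) = D_h(x*, X s + exp(−α s) • V s) + exp(β s) * (f (X s) − f x*) has derivative at t equal to −exp(α t + β t) * D_f(x*, X t) + (deriv β t − exp(α t)) * exp(β t) * (f (X t) − f x*), where D_f is the Bregman divergence of f. -/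

import Mathlib

open Real
open scoped RealInnerProductSpace

/-- Time derivative of the energy functional
`E(s) = D_h(x*, X s + e^{−α s} V s) + e^{β s}(f (X s) − f x*)` along a solution of the
Euler–Lagrange equation of the Bregman Lagrangian (computation in the proof of Theorem 1). -/
theorem energy_functional_deriv
    {E : Type*} [NormedAddCommGroup E] [InnerProductSpace ℝ E] [CompleteSpace E]
    (f h : E → ℝ) (hf : Differentiable ℝ f) (hh : Differentiable ℝ h)
    (xstar : E) (α β : ℝ → ℝ) (hβ : Differentiable ℝ β)
    (X V W : ℝ → E) (t : ℝ)
    (hX : HasDerivAt X (V t) t)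
    (hZ : HasDerivAt (fun s => X s + Real.exp (-(α s)) • V s) (W t) t)
    (hEL : HasDerivAt (fun s => gradient h (X s + Real.exp (-(α s)) • V s))
      (-(Real.exp (α t + β t)) • gradient f (X t)) t) :
    HasDerivAt
      (fun s =>
        (h xstar - h (X s + Real.exp (-(α s)) • V s)
          - ⟪gradient h (X s + Real.exp (-(α s)) • V s),
              xstar - (X s + Real.exp (-(α s)) • V s)⟫)
        + Real.exp (β s) * (f (X s) - f xstar))
      (-(Real.exp (α t + β t)) *
          (f xstar - f (X t) - ⟪gradient f (X t), xstar - X t⟫)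
        + (deriv β t - Real.exp (α t)) * Real.exp (β t) * (f (X t) - f xstar)) t := by
  -- derivative of h ∘ Z
  have hhZ : HasDerivAt (fun s => h (X s + Real.exp (-(α s)) • V s))
      ⟪gradient h (X t + Real.exp (-(α t)) • V t), W t⟫ t := by
    have := ((hh (X t + Real.exp (-(α t)) • V t)).hasGradientAt.hasFDerivAt.comp_hasDerivAt t hZ)
    simpa [Function.comp_def] using this
  -- derivative of f ∘ X
  have hfX : HasDerivAt (fun s => f (X s)) ⟪gradient f (X t), V t⟫ t := by
    have := ((hf (X t)).hasGradientAt.hasFDerivAt.comp_hasDerivAt t hX)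
    simpa [Function.comp_def] using this
  have hsub : HasDerivAt (fun s => xstar - (X s + Real.exp (-(α s)) • V s)) (-(W t)) t := by
    simpa [Pi.sub_def] using (hasDerivAt_const t xstar).sub hZ
  have hinner := hEL.inner ℝ hsub
  have hexp : HasDerivAt (fun s => Real.exp (β s)) (Real.exp (β t) * deriv β t) t :=
    (Real.hasDerivAt_exp (β t)).comp t (hβ t).hasDerivAt
  have hmain := (((hasDerivAt_const t (h xstar)).sub hhZ).sub hinner).add
    (hexp.mul (hfX.sub (hasDerivAt_const t (f xstar))))
  refine hmain.congr_deriv ?_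
  simp only [inner_sub_right, inner_add_right, real_inner_smul_right, real_inner_smul_left,
    inner_neg_left, inner_neg_right, Real.exp_add, Real.exp_neg, Pi.sub_apply]
  have hpos := Real.exp_pos (α t)
  field_simp
  ring
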